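/- Let Y be a metric space satisfying the SRA(α/2)-condition on a set {x₁,…,x_{k−1}} with R = min_{i<j} d(xᵢ,xⱼ), and let y₁,y₂ ∈ B_{αR/6}(x₁) and x, y ∈ {x₂,…,x_{k−1}}, z ∈ {y₁,y₂}. Writing z̄ = x₁ and x̄ = x, ȳ = y, we have: d(x,y) ≤ max{d(x,z) + α·d(z,y), α·d(x,z) + d(z,y)} whenever {x,y,z} consists of one point of {y₁,y₂} and two points of {x₂,…,x_{k−1}}. -/
import Mathlib


open Metric Set

theorem stmt_16 {X : Type*} [MetricSpace X] (n : ℕ) (α : ℝ) (hα : 0 < α) (hα1 : α < 1)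
    (x : Fin (n + 1) → X)
    (hSRA : ∀ i j l : Fin (n + 1), dist (x i) (x j) ≤
      max (dist (x i) (x l) + α / 2 * dist (x l) (x j))
        (α / 2 * dist (x i) (x l) + dist (x l) (x j)))
    (R : ℝ)
    (hR : IsLeast {d : ℝ | ∃ i j : Fin (n + 1), i ≠ j ∧ d = dist (x i) (x j)} R)
    (y₁ y₂ : X)
    (hy₁ : y₁ ∈ ball (x 0) (α * R / 6)) (hy₂ : y₂ ∈ ball (x 0) (α * R / 6)) :
    ∀ (i j : Fin n) (z : X), z = y₁ ∨ z = y₂ →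
      dist (x i.succ) (x j.succ) ≤
        max (dist (x i.succ) z + α * dist z (x j.succ))
          (α * dist (x i.succ) z + dist z (x j.succ)) := by
  intro i j z hz
  have hz0 : dist z (x 0) < α * R / 6 := by
    rcases hz with rfl | rfl
    · simpa [mem_ball] using hy₁
    · simpa [mem_ball] using hy₂
  have hR0 : 0 ≤ R := by
    obtain ⟨i, j, -, rfl⟩ := hR.1
    exact dist_nonneg
  have hRi : R ≤ dist (x i.succ) (x 0) :=
    hR.2 ⟨i.succ, 0, Fin.succ_ne_zero i, rfl⟩
  have hRj : R ≤ dist (x 0) (x j.succ) := by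
    have := hR.2 ⟨(0 : Fin (n+1)), j.succ, (Fin.succ_ne_zero j).symm, rfl⟩
    simpa using this
  have t1 : dist (x i.succ) (x 0) ≤ dist (x i.succ) z + dist z (x 0) := dist_triangle _ _ _
  have t2 : dist (x 0) (x j.succ) ≤ dist z (x 0) + dist z (x j.succ) := by
    rw [dist_comm z (x 0)]; exact dist_triangle _ _ _
  have t3 : dist z (x j.succ) ≥ dist (x 0) (x j.succ) - dist z (x 0) := by
    have := dist_triangle (x 0) z (x j.succ)
    rw [dist_comm (x 0) z] at this; linarith
  have t4 : dist (x i.succ) z ≥ dist (x i.succ) (x 0) - dist z (x 0) := by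
    have := dist_triangle (x i.succ) z (x 0)
    linarith
  have h := hSRA i.succ j.succ 0
  rcases le_max_iff.mp h with h' | h'
  · apply le_max_of_le_left
    nlinarith [dist_nonneg (x := z) (y := x (0:Fin (n+1)))]
  · apply le_max_of_le_right
    nlinarith [dist_nonneg (x := z) (y := x (0:Fin (n+1)))]
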